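/- Let Σ be a K×K symmetric positive-definite matrix, α ∈ ℝ^K, V(q) = αᵀ(Σ⁻¹ + diag(q))⁻¹α and γ(q) = (Σ⁻¹ + diag(q))⁻¹α. Then ∂²V/∂q_i∂q_j (q) = 2 γ_i(q) γ_j(q) [(Σ⁻¹ + diag(q))⁻¹]_{ij} for all i, j, i.e., the Hessian of V at q equals 2·diag(γ)·(Σ⁻¹ + diag(q))⁻¹·diag(γ). -/

import Mathlib

open Matrix

attribute [local instance] Matrix.linftyOpNormedRing Matrix.linftyOpNormedAlgebra

section Aux

variable {K : ℕ}

/-- The continuous linear map `M ↦ M *ᵥ α`. -/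
noncomputable def psiCLM (α : Fin K → ℝ) : Matrix (Fin K) (Fin K) ℝ →L[ℝ] (Fin K → ℝ) :=
  LinearMap.toContinuousLinearMap
    { toFun := fun M => M *ᵥ α
      map_add' := fun M N => Matrix.add_mulVec M N α
      map_smul' := fun c M => (smul_mulVec c M α) }

@[simp] lemma psiCLM_apply (α : Fin K → ℝ) (M : Matrix (Fin K) (Fin K) ℝ) :
    psiCLM α M = M *ᵥ α := rfl

/-- The continuous linear map `v ↦ diagonal v`. -/
noncomputable def diagCLM : (Fin K → ℝ) →L[ℝ] Matrix (Fin K) (Fin K) ℝ :=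
  LinearMap.toContinuousLinearMap
    { toFun := fun v => diagonal v
      map_add' := fun u v => by simp [diagonal_add]
      map_smul' := fun c v => by simp [diagonal_smul] }

@[simp] lemma diagCLM_apply (v : Fin K → ℝ) : (diagCLM v) = diagonal v := rfl

lemma hasFDerivAt_affine (S : Matrix (Fin K) (Fin K) ℝ) (p : Fin K → ℝ) :
    HasFDerivAt (fun r : Fin K → ℝ => S⁻¹ + diagonal r) diagCLM p := by
  exact (diagCLM.hasFDerivAt (x := p)).const_add (S⁻¹)

lemma diag_single_mulVec (i : Fin K) (x : Fin K → ℝ) :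
    diagonal (Pi.single i (1:ℝ)) *ᵥ x = Pi.single i (x i) := by
  ext k
  rcases eq_or_ne k i with rfl | h
  · simp [mulVec_diagonal]
  · simp [mulVec_diagonal, Pi.single_apply, h]

end Aux

section Main

variable {K : ℕ}

/-- dot product with α as CLM -/
noncomputable def dotCLM (α : Fin K → ℝ) : (Fin K → ℝ) →L[ℝ] ℝ :=
  LinearMap.toContinuousLinearMap
    { toFun := fun x => α ⬝ᵥ x
      map_add' := fun x y => dotProduct_add α x y
      map_smul' := fun c x => dotProduct_smul c α x }

@[simp] lemma dotCLM_apply (α x : Fin K → ℝ) : dotCLM α x = α ⬝ᵥ x := rfl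

lemma hasFDerivAt_matinv (S : Matrix (Fin K) (Fin K) ℝ) (p : Fin K → ℝ)
    (hp : IsUnit (S⁻¹ + diagonal p)) :
    HasFDerivAt (fun r : Fin K → ℝ => (S⁻¹ + diagonal r)⁻¹)
      ((-(ContinuousLinearMap.mulLeftRight ℝ _ ((S⁻¹ + diagonal p)⁻¹)
        ((S⁻¹ + diagonal p)⁻¹))).comp diagCLM) p := by
  have h1 : HasFDerivAt (Ring.inverse : Matrix (Fin K) (Fin K) ℝ → _)
      (-(ContinuousLinearMap.mulLeftRight ℝ _ (↑hp.unit⁻¹) (↑hp.unit⁻¹))) (S⁻¹ + diagonal p) := by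
    have := hasFDerivAt_ringInverse (𝕜 := ℝ) hp.unit
    rwa [hp.unit_spec] at this
  have e : (↑hp.unit⁻¹ : Matrix (Fin K) (Fin K) ℝ) = (S⁻¹ + diagonal p)⁻¹ :=
    calc (↑hp.unit⁻¹ : Matrix (Fin K) (Fin K) ℝ)
        = Ring.inverse (↑hp.unit : Matrix (Fin K) (Fin K) ℝ) := (Ring.inverse_unit _).symm
      _ = Ring.inverse (S⁻¹ + diagonal p) := by rw [hp.unit_spec]
      _ = (S⁻¹ + diagonal p)⁻¹ := (Matrix.nonsing_inv_eq_ringInverse _).symm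
  simp only [e] at h1
  have h2 := h1.comp p (hasFDerivAt_affine S p)
  simpa [Function.comp_def, Matrix.nonsing_inv_eq_ringInverse] using h2

lemma Asym (S : Matrix (Fin K) (Fin K) ℝ) (hS : S.PosDef) (p : Fin K → ℝ) :
    (S⁻¹ + diagonal p)ᵀ = S⁻¹ + diagonal p := by
  have h : Sᵀ = S := by
    ext a b
    have := congrFun (congrFun hS.isHermitian.eq a) b
    simpa using this
  rw [transpose_add, transpose_nonsing_inv, h, diagonal_transpose]

lemma Binv_symm (S : Matrix (Fin K) (Fin K) ℝ) (hS : S.PosDef) (p : Fin K → ℝ) :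
    ((S⁻¹ + diagonal p)⁻¹)ᵀ = (S⁻¹ + diagonal p)⁻¹ := by
  rw [transpose_nonsing_inv, Asym S hS]

lemma inner_fderiv (S : Matrix (Fin K) (Fin K) ℝ) (hS : S.PosDef) (α : Fin K → ℝ)
    (p : Fin K → ℝ) (hp : IsUnit (S⁻¹ + diagonal p)) (i : Fin K) :
    fderiv ℝ (fun r : Fin K → ℝ => α ⬝ᵥ ((S⁻¹ + diagonal r)⁻¹ *ᵥ α)) p (Pi.single i 1)
      = -((((S⁻¹ + diagonal p)⁻¹ *ᵥ α) i) * (((S⁻¹ + diagonal p)⁻¹ *ᵥ α) i)) := by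
  set B := (S⁻¹ + diagonal p)⁻¹ with hB
  have hV : HasFDerivAt (fun r : Fin K → ℝ => α ⬝ᵥ ((S⁻¹ + diagonal r)⁻¹ *ᵥ α))
      (((dotCLM α).comp (psiCLM α)).comp
        ((-(ContinuousLinearMap.mulLeftRight ℝ _ B B)).comp diagCLM)) p :=
    ((dotCLM α).comp (psiCLM α)).hasFDerivAt.comp p (hasFDerivAt_matinv S p hp)
  rw [hV.fderiv]
  have key : α ⬝ᵥ ((B * diagonal (Pi.single i 1) * B) *ᵥ α) = (B *ᵥ α) i * (B *ᵥ α) i := by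
    rw [← mulVec_mulVec, ← mulVec_mulVec, diag_single_mulVec, dotProduct_mulVec]
    have hvm : α ᵥ* B = B *ᵥ α := by
      rw [← (mulVec_transpose B α), Binv_symm S hS]
    rw [hvm, dotProduct_single]
  show α ⬝ᵥ ((-(B * diagonal (Pi.single i 1) * B)) *ᵥ α) = _
  rw [neg_mulVec, dotProduct_neg, key]

lemma eventually_isUnit (S : Matrix (Fin K) (Fin K) ℝ) (hS : S.PosDef)
    (q : Fin K → ℝ) (hq : ∀ i, 0 ≤ q i) :
    ∀ᶠ p in nhds q, IsUnit (S⁻¹ + diagonal p) := by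
  have hpd : (S⁻¹ + diagonal q).PosDef :=
    hS.inv.add_posSemidef ((posSemidef_diagonal_iff).2 hq)
  have hc : Continuous fun p : Fin K → ℝ => (S⁻¹ + diagonal p).det :=
    (continuous_const.add (continuous_id.matrix_diagonal)).matrix_det
  have hdet : (S⁻¹ + diagonal q).det ≠ 0 := hpd.det_pos.ne'
  exact (hc.continuousAt.eventually_ne hdet).mono fun p hp =>
    (isUnit_iff_isUnit_det _).2 (isUnit_iff_ne_zero.2 hp)

end Main

theorem stmt_2 {K : ℕ} (S : Matrix (Fin K) (Fin K) ℝ) (hS : S.PosDef)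
    (α : Fin K → ℝ) (q : Fin K → ℝ) (hq : ∀ i, 0 ≤ q i) (i j : Fin K) :
    fderiv ℝ
        (fun p : Fin K → ℝ =>
          fderiv ℝ (fun r : Fin K → ℝ => α ⬝ᵥ ((S⁻¹ + diagonal r)⁻¹ *ᵥ α)) p
            (Pi.single i 1))
        q (Pi.single j 1)
      = 2 * (((S⁻¹ + diagonal q)⁻¹ *ᵥ α) i) * (((S⁻¹ + diagonal q)⁻¹ *ᵥ α) j) *
          ((S⁻¹ + diagonal q)⁻¹ i j) := by
  have hEv := eventually_isUnit S hS q hq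
  have hqu : IsUnit (S⁻¹ + diagonal q) := hEv.self_of_nhds
  have hEq : (fun p : Fin K → ℝ =>
        fderiv ℝ (fun r : Fin K → ℝ => α ⬝ᵥ ((S⁻¹ + diagonal r)⁻¹ *ᵥ α)) p (Pi.single i 1))
      =ᶠ[nhds q]
      (fun p : Fin K → ℝ =>
        -((((S⁻¹ + diagonal p)⁻¹ *ᵥ α) i) * (((S⁻¹ + diagonal p)⁻¹ *ᵥ α) i))) :=
    hEv.mono fun p hp => inner_fderiv S hS α p hp i
  rw [Filter.EventuallyEq.fderiv_eq hEq]
  set B := (S⁻¹ + diagonal q)⁻¹ with hB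
  have hγ : HasFDerivAt (fun p : Fin K → ℝ => ((S⁻¹ + diagonal p)⁻¹ *ᵥ α) i)
      ((ContinuousLinearMap.proj i).comp ((psiCLM α).comp
        ((-(ContinuousLinearMap.mulLeftRight ℝ _ B B)).comp diagCLM))) q :=
    ((ContinuousLinearMap.proj i).comp (psiCLM α)).hasFDerivAt.comp q
      (hasFDerivAt_matinv S q hqu) |>.congr_fderiv (ContinuousLinearMap.ext fun _ => rfl)
  have hg : HasFDerivAt
      (fun p : Fin K → ℝ =>
        -((((S⁻¹ + diagonal p)⁻¹ *ᵥ α) i) * (((S⁻¹ + diagonal p)⁻¹ *ᵥ α) i))) _ q :=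
    (hγ.mul hγ).neg
  rw [hg.fderiv]
  have hval : ((ContinuousLinearMap.proj i).comp ((psiCLM α).comp
        ((-(ContinuousLinearMap.mulLeftRight ℝ _ B B)).comp diagCLM))) (Pi.single j 1)
      = -(B i j * (B *ᵥ α) j) := by
    show ((-(B * diagonal (Pi.single j 1) * B)) *ᵥ α) i = _
    rw [neg_mulVec, Pi.neg_apply]
    rw [← mulVec_mulVec, ← mulVec_mulVec, diag_single_mulVec, mulVec_single]
    simp
  simp only [ContinuousLinearMap.neg_apply, ContinuousLinearMap.add_apply,
    ContinuousLinearMap.smul_apply, hval, smul_eq_mul]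
  ring
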